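/- For random points, the spherical cap discrepancy of N i.i.d. uniformly distributed points on S² satisfies the lower moment bound E[D(Z_N)²] ≥ 1/(6N). -/

import Mathlib

open MeasureTheory Metric
open scoped Classical RealInnerProductSpace
open scoped Pointwise

noncomputable section

local notation "E3" => EuclideanSpace ℝ (Fin 3)
local notation "S2" => sphere (0 : EuclideanSpace ℝ (Fin 3)) 1

/-- Normalised surface measure on the unit sphere `S² ⊂ ℝ³`. -/
noncomputable def sigmaSphere : Measure (sphere (0 : EuclideanSpace ℝ (Fin 3)) 1) :=
  ((volume : Measure (EuclideanSpace ℝ (Fin 3))).toSphere Set.univ)⁻¹ •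
    (volume : Measure (EuclideanSpace ℝ (Fin 3))).toSphere

/-- The spherical cap discrepancy of a configuration of `N` points on `S²`. -/
noncomputable def sphCapDisc (N : ℕ) (X : Fin N → sphere (0 : EuclideanSpace ℝ (Fin 3)) 1) : ℝ :=
  ⨆ c : {c : EuclideanSpace ℝ (Fin 3) × ℝ // ‖c.1‖ = 1 ∧ c.2 ∈ Set.Icc (-1 : ℝ) 1},
    |(∑ n, if c.val.2 < ⟪c.val.1, (X n : EuclideanSpace ℝ (Fin 3))⟫ then (1 : ℝ) else 0) / N -
      (sigmaSphere {y : sphere (0 : EuclideanSpace ℝ (Fin 3)) 1 |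
        c.val.2 < ⟪c.val.1, (y : EuclideanSpace ℝ (Fin 3))⟫}).toReal|

def capS (w : E3) (t : ℝ) : Set S2 :=
  {y : S2 | t < ⟪w, (y : E3)⟫}

lemma continuous_innerS (w : E3) : Continuous fun y : S2 => ⟪w, (y : E3)⟫ :=
  continuous_const.inner continuous_subtype_val

lemma measurableSet_capS (w : E3) (t : ℝ) : MeasurableSet (capS w t) :=
  measurableSet_lt measurable_const (continuous_innerS w).measurable

lemma exists_rot (u v : E3) (hu : ‖u‖ = 1) (hv : ‖v‖ = 1) :
    ∃ R : E3 ≃ₗᵢ[ℝ] E3, R u = v := by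
  by_cases h : u + v = 0
  · exact ⟨LinearIsometryEquiv.neg ℝ, by simp [eq_neg_of_add_eq_zero_left h]⟩
  · refine ⟨Submodule.reflection (𝕜 := ℝ) (ℝ ∙ (u + v)), ?_⟩
    rw [Submodule.reflection_singleton_apply]
    simp only [RCLike.ofReal_real_eq_id, id_eq]
    have h2 : (‖u + v‖ : ℝ) ^ 2 = 2 + 2 * ⟪v, u⟫ := by
      rw [← real_inner_self_eq_norm_sq, inner_add_add_self, real_inner_self_eq_norm_sq,
        real_inner_self_eq_norm_sq, hu, hv, real_inner_comm]; ring
    have h1 : ⟪u + v, u⟫ = 1 + ⟪v, u⟫ := by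
      rw [inner_add_left, real_inner_self_eq_norm_sq, hu]; ring
    have hne : (2 : ℝ) + 2 * ⟪v, u⟫ ≠ 0 := by
      intro h0
      apply h
      have hz : ‖u + v‖ ^ 2 = 0 := by rw [h2, h0]
      exact norm_eq_zero.mp (pow_eq_zero_iff (n := 2) (by norm_num) |>.mp hz)
    rw [h1, h2]
    have hc : (1 + ⟪v, u⟫) / (2 + 2 * ⟪v, u⟫) = 1 / 2 := by
      rw [div_eq_div_iff hne (by norm_num)]; ring
    rw [hc]
    have hs : (2:ℕ) • ((1:ℝ) / 2) • (u + v) = ((1:ℝ)) • (u + v) := by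
      rw [two_smul, ← add_smul]; norm_num
    rw [hs, one_smul]
    abel

lemma toSphere_capS_rot (R : E3 ≃ₗᵢ[ℝ] E3) (w : E3) (t : ℝ) :
    (volume : Measure E3).toSphere (capS (R w) t)
      = (volume : Measure E3).toSphere (capS w t) := by
  rw [Measure.toSphere_apply' _ (measurableSet_capS _ _),
      Measure.toSphere_apply' _ (measurableSet_capS _ _)]
  congr 1
  have himg : (Set.Ioo (0:ℝ) 1 • (Subtype.val '' capS (R w) t) : Set E3)
      = R '' (Set.Ioo (0:ℝ) 1 • (Subtype.val '' capS w t)) := by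
    ext x
    simp only [Set.mem_smul_set, Set.mem_image]
    constructor
    · rintro ⟨r, hr, y, ⟨z, hz, rfl⟩, rfl⟩
      refine ⟨r • (R.symm (z : E3)), ⟨r, hr, R.symm (z : E3),
        ⟨⟨R.symm (z : E3), ?_⟩, ?_, rfl⟩, rfl⟩, ?_⟩
      · rw [mem_sphere_zero_iff_norm, R.symm.norm_map]
        exact mem_sphere_zero_iff_norm.mp z.2
      · show t < ⟪w, R.symm (z : E3)⟫
        have hin : ⟪R w, R (R.symm (z : E3))⟫ = ⟪w, R.symm (z : E3)⟫ := R.inner_map_map _ _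
        rw [R.apply_symm_apply] at hin
        rw [← hin]; exact hz
      · rw [_root_.map_smul, R.apply_symm_apply]
    · rintro ⟨x', ⟨r, hr, y, ⟨z, hz, rfl⟩, rfl⟩, rfl⟩
      refine ⟨r, hr, R (z : E3), ⟨⟨R (z : E3), ?_⟩, ?_, rfl⟩, ?_⟩
      · rw [mem_sphere_zero_iff_norm, R.norm_map]
        exact mem_sphere_zero_iff_norm.mp z.2
      · show t < ⟪R w, R (z : E3)⟫
        rw [R.inner_map_map]; exact hz
      · exact (_root_.map_smul R r (z : E3)).symm
  rw [himg]
  have hme : MeasurableEmbedding (R : E3 → E3) := R.toMeasurableEquiv.measurableEmbedding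
  calc volume (R '' (Set.Ioo (0:ℝ) 1 • (Subtype.val '' capS w t)))
      = (Measure.map R volume) (R '' (Set.Ioo (0:ℝ) 1 • (Subtype.val '' capS w t))) := by
        rw [R.measurePreserving.map_eq]
    _ = volume (R ⁻¹' (R '' (Set.Ioo (0:ℝ) 1 • (Subtype.val '' capS w t)))) := hme.map_apply _ _
    _ = volume (Set.Ioo (0:ℝ) 1 • (Subtype.val '' capS w t)) := by
        rw [Set.preimage_image_eq _ R.injective]

def e₁ : E3 := EuclideanSpace.single (0 : Fin 3) (1 : ℝ)

lemma norm_e₁ : ‖e₁‖ = 1 := by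
  rw [e₁, EuclideanSpace.norm_single]; norm_num

lemma sigma_capS_eq (w : E3) (hw : ‖w‖ = 1) (t : ℝ) :
    sigmaSphere (capS w t) = sigmaSphere (capS e₁ t) := by
  obtain ⟨R, hR⟩ := exists_rot e₁ w norm_e₁ hw
  rw [sigmaSphere, Measure.smul_apply, Measure.smul_apply, ← hR, toSphere_capS_rot]

instance : IsProbabilityMeasure sigmaSphere := by
  constructor
  rw [sigmaSphere, Measure.smul_apply, smul_eq_mul]
  have h3 : (Module.finrank ℝ E3) = 3 := by simp
  have huniv : (volume : Measure E3).toSphere Set.univ = 3 * volume (ball (0:E3) 1) := by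
    rw [Measure.toSphere_apply_univ, h3]; norm_num
  have h0 : (volume : Measure E3).toSphere Set.univ ≠ 0 := by
    rw [huniv]
    exact mul_ne_zero (by norm_num) (measure_ball_pos volume _ one_pos).ne'
  have htop : (volume : Measure E3).toSphere Set.univ ≠ ⊤ := by
    rw [huniv]
    exact ENNReal.mul_ne_top (by norm_num) measure_ball_lt_top.ne
  exact ENNReal.inv_mul_cancel h0 htop

lemma sigma_equator (w : E3) (hw : ‖w‖ = 1) :
    sigmaSphere {y : S2 | ⟪w, (y : E3)⟫ = 0} = 0 := by
  have hmeas : MeasurableSet {y : S2 | ⟪w, (y : E3)⟫ = 0} :=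
    measurableSet_eq_fun (continuous_innerS w).measurable measurable_const
  rw [sigmaSphere, Measure.smul_apply, smul_eq_mul]
  have hz : (volume : Measure E3).toSphere {y : S2 | ⟪w, (y : E3)⟫ = 0} = 0 := by
    rw [Measure.toSphere_apply' _ hmeas]
    have hsub : (Set.Ioo (0:ℝ) 1 • (Subtype.val '' {y : S2 | ⟪w, (y : E3)⟫ = 0}) : Set E3)
        ⊆ ((ℝ ∙ w)ᗮ : Submodule ℝ E3) := by
      rintro x ⟨r, hr, y, ⟨z, hz, rfl⟩, rfl⟩
      rw [SetLike.mem_coe, Submodule.mem_orthogonal_singleton_iff_inner_right]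
      rw [real_inner_smul_right, hz, mul_zero]
    have hne : ((ℝ ∙ w)ᗮ : Submodule ℝ E3) ≠ ⊤ := by
      intro h
      have hmem : w ∈ (ℝ ∙ w)ᗮ := h ▸ Submodule.mem_top
      rw [Submodule.mem_orthogonal_singleton_iff_inner_right,
        real_inner_self_eq_norm_sq, hw] at hmem
      norm_num at hmem
    have h0 := Measure.addHaar_submodule (volume : Measure E3) _ hne
    rw [measure_mono_null hsub h0]
    simp
  rw [hz, mul_zero]

lemma sigma_hemisphere (w : E3) (hw : ‖w‖ = 1) :
    sigmaSphere (capS w 0) = 1 / 2 := by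
  have hneg : ‖(-w : E3)‖ = 1 := by rwa [norm_neg]
  have hAB : sigmaSphere (capS (-w) 0) = sigmaSphere (capS w 0) := by
    rw [sigma_capS_eq _ hneg, sigma_capS_eq _ hw]
  have hdisj : Disjoint (capS w 0) (capS (-w) 0) := by
    rw [Set.disjoint_left]
    intro y hy hy'
    have h1 : (0:ℝ) < ⟪w, (y : E3)⟫ := hy
    have h2 : (0:ℝ) < ⟪-w, (y : E3)⟫ := hy'
    rw [inner_neg_left] at h2
    linarith
  have hcompl : capS w 0 ∪ capS (-w) 0 = {y : S2 | ⟪w, (y : E3)⟫ = 0}ᶜ := by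
    ext y
    simp only [capS, Set.mem_union, Set.mem_setOf_eq, Set.mem_compl_iff, inner_neg_left]
    constructor
    · rintro (h | h) <;> intro h0 <;> linarith
    · intro h
      rcases lt_trichotomy (0:ℝ) ⟪w, (y : E3)⟫ with h' | h' | h'
      · exact Or.inl h'
      · exact absurd h'.symm h
      · exact Or.inr (by linarith)
  have hmeasZ : MeasurableSet {y : S2 | ⟪w, (y : E3)⟫ = 0} :=
    measurableSet_eq_fun (continuous_innerS w).measurable measurable_const
  have hunion : sigmaSphere (capS w 0 ∪ capS (-w) 0) = 1 := by
    rw [hcompl, measure_compl hmeasZ (measure_ne_top _ _), sigma_equator w hw,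
      measure_univ, tsub_zero]
  rw [measure_union hdisj (measurableSet_capS _ _), hAB] at hunion
  have h2 : 2 * sigmaSphere (capS w 0) = 1 := by rw [two_mul]; exact hunion
  rw [ENNReal.eq_div_iff (by norm_num) (by norm_num)]
  exact h2

lemma tendsto_sigma_cap (w : E3) (t δ : ℝ) (hδ : 0 < δ) :
    Filter.Tendsto (fun n : ℕ => (sigmaSphere (capS w (t + δ/(n+1)))).toReal)
      Filter.atTop (nhds ((sigmaSphere (capS w t)).toReal)) := by
  have hmono : Monotone (fun n : ℕ => capS w (t + δ/(n+1))) := by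
    intro n m hnm y hy
    have hle : t + δ/(m+1) ≤ t + δ/(n+1) := by
      have h1 : ((n:ℝ)+1) ≤ ((m:ℝ)+1) := by exact_mod_cast Nat.succ_le_succ hnm
      gcongr
    exact lt_of_le_of_lt hle hy
  have hunion : (⋃ n : ℕ, capS w (t + δ/(n+1))) = capS w t := by
    ext y
    simp only [Set.mem_iUnion]
    constructor
    · rintro ⟨n, hn⟩
      have : t < t + δ/(n+1) := by
        have : (0:ℝ) < δ/(n+1) := by positivity
        linarith
      exact lt_trans this hn
    · intro hy
      have hd : (0:ℝ) < ⟪w, (y : E3)⟫ - t := sub_pos.mpr hy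
      obtain ⟨n, hn⟩ := exists_nat_gt (δ / (⟪w, (y : E3)⟫ - t))
      refine ⟨n, ?_⟩
      show t + δ/(n+1) < ⟪w, (y : E3)⟫
      have h1 : δ / (⟪w, (y : E3)⟫ - t) < (n:ℝ) + 1 := lt_trans hn (by linarith)
      rw [div_lt_iff₀ hd] at h1
      have h2 : δ/((n:ℝ)+1) < ⟪w, (y : E3)⟫ - t := by
        rw [div_lt_iff₀ (by positivity)]
        linarith [h1]
      linarith
  have h := tendsto_measure_iUnion_atTop (μ := sigmaSphere) hmono
  rw [hunion] at h
  exact (ENNReal.tendsto_toReal (measure_ne_top _ _)).comp h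

abbrev CapIdx := {c : EuclideanSpace ℝ (Fin 3) × ℝ // ‖c.1‖ = 1 ∧ c.2 ∈ Set.Icc (-1 : ℝ) 1}

def Fc (N : ℕ) (c : CapIdx) (X : Fin N → S2) : ℝ :=
  |(∑ n, if c.val.2 < ⟪c.val.1, (X n : E3)⟫ then (1 : ℝ) else 0) / N -
    (sigmaSphere (capS c.val.1 c.val.2)).toReal|

lemma sum_ite_mem (N : ℕ) (w : E3) (t : ℝ) (X : Fin N → S2) :
    (0:ℝ) ≤ (∑ n, if t < ⟪w, (X n : E3)⟫ then (1 : ℝ) else 0) / N ∧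
    (∑ n, if t < ⟪w, (X n : E3)⟫ then (1 : ℝ) else 0) / N ≤ 1 := by
  constructor
  · apply div_nonneg _ (Nat.cast_nonneg N)
    apply Finset.sum_nonneg
    intro n _
    split_ifs <;> norm_num
  · apply div_le_one_of_le₀ _ (Nat.cast_nonneg N)
    calc (∑ n, if t < ⟪w, (X n : E3)⟫ then (1 : ℝ) else 0)
        ≤ ∑ _n : Fin N, (1:ℝ) := by
          apply Finset.sum_le_sum
          intro n _
          split_ifs <;> norm_num
      _ = N := by simp

lemma sigma_toReal_mem (s : Set S2) :
    (0:ℝ) ≤ (sigmaSphere s).toReal ∧ (sigmaSphere s).toReal ≤ 1 := by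
  refine ⟨ENNReal.toReal_nonneg, ?_⟩
  have h := prob_le_one (μ := sigmaSphere) (s := s)
  calc (sigmaSphere s).toReal ≤ (1 : ENNReal).toReal :=
        ENNReal.toReal_mono (by norm_num) h
    _ = 1 := by simp

lemma Fc_nonneg (N : ℕ) (c : CapIdx) (X : Fin N → S2) : 0 ≤ Fc N c X := abs_nonneg _

lemma Fc_le_two (N : ℕ) (c : CapIdx) (X : Fin N → S2) : Fc N c X ≤ 2 := by
  obtain ⟨h1, h2⟩ := sum_ite_mem N c.val.1 c.val.2 X
  obtain ⟨h3, h4⟩ := sigma_toReal_mem (capS c.val.1 c.val.2)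
  rw [Fc, abs_le]
  constructor <;> linarith

lemma measurable_Fc (N : ℕ) (c : CapIdx) : Measurable (Fc N c) := by
  apply Measurable.abs
  apply Measurable.sub _ measurable_const
  apply Measurable.div_const
  apply Finset.measurable_sum
  intro n _
  have hm : Measurable (fun X : Fin N → S2 => X n) := measurable_pi_apply n
  have hpre : MeasurableSet {X : Fin N → S2 | c.val.2 < ⟪c.val.1, (X n : E3)⟫} :=
    hm (measurableSet_capS c.val.1 c.val.2)
  exact Measurable.ite hpre measurable_const measurable_const

instance : Nonempty CapIdx :=
  ⟨⟨(e₁, 0), norm_e₁, by constructor <;> norm_num⟩⟩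

lemma Fc_approx (N : ℕ) (s : Set CapIdx) (hs : Dense s) (c : CapIdx) (X : Fin N → S2)
    (ε : ℝ) (hε : 0 < ε) : ∃ c' ∈ s, Fc N c X ≤ Fc N c' X + ε := by
  obtain ⟨⟨w, t⟩, hw, ht⟩ := c
  have hw1 : ‖w‖ = 1 := hw
  have htIcc : t ∈ Set.Icc (-1:ℝ) 1 := ht
  simp only [Fc] at *
  rcases eq_or_lt_of_le htIcc.2 with ht1 | htlt
  · -- t = 1 : the cap is empty and no point is counted
    obtain ⟨c₀, hc₀⟩ := hs.nonempty
    refine ⟨c₀, hc₀, ?_⟩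
    have hzero : ∀ n, ¬ ((w, t).2 < ⟪(w, t).1, (X n : E3)⟫) := by
      intro n h
      have hXn : ‖(X n : E3)‖ = 1 := mem_sphere_zero_iff_norm.mp (X n).2
      have hle := real_inner_le_norm w (X n : E3)
      rw [hw1, hXn, one_mul] at hle
      have h' : t < ⟪w, (X n : E3)⟫ := h
      rw [ht1] at h'
      linarith
    have hcap : capS (w, t).1 (w, t).2 = ∅ := by
      ext y
      simp only [capS, Set.mem_setOf_eq, Set.mem_empty_iff_false, iff_false]
      intro h
      have hXn : ‖(y : E3)‖ = 1 := mem_sphere_zero_iff_norm.mp y.2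
      have hle := real_inner_le_norm w (y : E3)
      rw [hw1, hXn, one_mul] at hle
      have h' : t < ⟪w, (y : E3)⟫ := h
      rw [ht1] at h'
      linarith
    have h1 : (∑ n, if (w, t).2 < ⟪(w, t).1, (X n : E3)⟫ then (1:ℝ) else 0) = 0 := by
      apply Finset.sum_eq_zero
      intro n _
      rw [if_neg (hzero n)]
    rw [h1, hcap]
    simp only [measure_empty, ENNReal.toReal_zero, zero_div, sub_zero, abs_zero]
    have := abs_nonneg ((∑ n, if (c₀.val).2 < ⟪(c₀.val).1, (X n : E3)⟫ then (1:ℝ) else 0) / N -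
      (sigmaSphere (capS (c₀.val).1 (c₀.val).2)).toReal)
    linarith
  · -- t < 1
    set a : Fin N → ℝ := fun n => ⟪w, (X n : E3)⟫ with ha
    have hδex : ∃ δ : ℝ, 0 < δ ∧ δ ≤ 1 - t ∧ ∀ n, t < a n → t + δ ≤ a n := by
      classical
      set T := Finset.univ.filter (fun n => t < a n) with hT
      set s' := insert (1 - t) (T.image (fun n => a n - t)) with hs'
      have hne : s'.Nonempty := Finset.insert_nonempty _ _
      refine ⟨s'.min' hne, ?_, ?_, ?_⟩
      · rw [Finset.lt_min'_iff]
        intro y hy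
        rw [hs', Finset.mem_insert] at hy
        rcases hy with rfl | hy
        · linarith
        · obtain ⟨n, hn, rfl⟩ := Finset.mem_image.mp hy
          rw [hT, Finset.mem_filter] at hn
          linarith [hn.2]
      · exact Finset.min'_le _ _ (Finset.mem_insert_self _ _)
      · intro n hn
        have hmem : a n - t ∈ s' := by
          rw [hs', Finset.mem_insert]
          right
          exact Finset.mem_image.mpr ⟨n,
            by rw [hT, Finset.mem_filter]; exact ⟨Finset.mem_univ n, hn⟩, rfl⟩
        have := Finset.min'_le _ _ hmem
        linarith
    obtain ⟨δ, hδ0, hδ1, hδgap⟩ := hδex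
    obtain ⟨K, hK⟩ := Metric.tendsto_atTop.mp (tendsto_sigma_cap w t δ hδ0) (ε/2) (half_pos hε)
    set k := max K 1 with hk
    have hkK : K ≤ k := le_max_left _ _
    have hk1 : (1:ℕ) ≤ k := le_max_right _ _
    set β := δ / (k+1) with hβ
    have hβ0 : 0 < β := by positivity
    have h2k : (2:ℝ) ≤ (k:ℝ) + 1 := by
      have : (1:ℝ) ≤ (k:ℝ) := by exact_mod_cast hk1
      linarith
    have hβδ : 2*β ≤ δ := by
      have hhalf : β ≤ δ/2 := by
        rw [hβ]
        gcongr
      linarith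
    have hψ : |(sigmaSphere (capS w (t+β))).toReal - (sigmaSphere (capS w t)).toReal| < ε/2 := by
      have := hK k hkK
      rwa [Real.dist_eq] at this
    have hmemIcc : t + 3*β/4 ∈ Set.Icc (-1:ℝ) 1 := by
      rw [Set.mem_Icc]
      have hlo := htIcc.1
      constructor
      · linarith
      · linarith
    obtain ⟨c', hc's, hc'd⟩ := hs.exists_dist_lt (⟨(w, t + 3*β/4), hw1, hmemIcc⟩ : CapIdx)
      (show (0:ℝ) < β/8 by positivity)
    set w' := c'.val.1 with hw'def
    set t' := c'.val.2 with ht'def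
    have hw'1 : ‖w'‖ = 1 := c'.2.1
    have hd := hc'd
    rw [Subtype.dist_eq, Prod.dist_eq] at hd
    have hww : ‖w' - w‖ < β/8 := by
      have := lt_of_le_of_lt (le_max_left (dist (w, t+3*β/4).1 c'.val.1) (dist (w, t+3*β/4).2 c'.val.2)) hd
      rw [dist_eq_norm] at this
      rw [norm_sub_rev]
      exact this
    have htt : |t' - (t + 3*β/4)| < β/8 := by
      have := lt_of_le_of_lt (le_max_right (dist (w, t+3*β/4).1 c'.val.1) (dist (w, t+3*β/4).2 c'.val.2)) hd
      rw [Real.dist_eq, abs_sub_comm] at this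
      exact this
    obtain ⟨htt1, htt2⟩ := abs_lt.mp htt
    have htlo : t + 5*β/8 < t' := by linarith
    have hthi : t' < t + 7*β/8 := by linarith
    have hcount : ∀ n, (t' < ⟪w', (X n : E3)⟫) ↔ (t < a n) := by
      intro n
      have hXn : ‖(X n : E3)‖ = 1 := mem_sphere_zero_iff_norm.mp (X n).2
      have hdiff : |⟪w', (X n : E3)⟫ - a n| ≤ ‖w' - w‖ := by
        have : ⟪w', (X n : E3)⟫ - a n = ⟪w' - w, (X n : E3)⟫ := by
          rw [ha]
          simp only
          rw [inner_sub_left]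
        rw [this]
        calc |⟪w' - w, (X n : E3)⟫| ≤ ‖w' - w‖ * ‖(X n : E3)‖ := abs_real_inner_le_norm _ _
          _ = ‖w' - w‖ := by rw [hXn, mul_one]
      obtain ⟨hdiff1, hdiff2⟩ := abs_le.mp hdiff
      constructor
      · intro h
        by_contra hna
        push_neg at hna
        linarith
      · intro h
        have := hδgap n h
        linarith
    have hsum : (∑ n, if t' < ⟪w', (X n : E3)⟫ then (1:ℝ) else 0)
        = (∑ n, if (w, t).2 < ⟪(w, t).1, (X n : E3)⟫ then (1:ℝ) else 0) := by
      apply Finset.sum_congr rfl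
      intro n _
      exact if_congr (hcount n) rfl rfl
    have hsub1 : capS w (t+β) ⊆ capS w t' := fun y hy => lt_trans (by linarith : t' < t + β) hy
    have hsub2 : capS w t' ⊆ capS w t := fun y hy => lt_trans (by linarith : t < t') hy
    have hm1 : (sigmaSphere (capS w (t+β))).toReal ≤ (sigmaSphere (capS w t')).toReal :=
      ENNReal.toReal_mono (measure_ne_top _ _) (measure_mono hsub1)
    have hm2 : (sigmaSphere (capS w t')).toReal ≤ (sigmaSphere (capS w t)).toReal :=
      ENNReal.toReal_mono (measure_ne_top _ _) (measure_mono hsub2)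
    have hσeq : sigmaSphere (capS w' t') = sigmaSphere (capS w t') := by
      rw [sigma_capS_eq w' hw'1, sigma_capS_eq w hw1]
    obtain ⟨hψ1, hψ2⟩ := abs_lt.mp hψ
    have hclose : |(sigmaSphere (capS w' t')).toReal - (sigmaSphere (capS w t)).toReal| ≤ ε/2 := by
      rw [hσeq, abs_le]
      constructor <;> linarith
    refine ⟨c', hc's, ?_⟩
    have key : ∀ (S b b' : ℝ), |b - b'| ≤ ε/2 → |S - b| ≤ |S - b'| + ε := by
      intro S b b' hbb
      obtain ⟨h1, h2⟩ := abs_le.mp hbb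
      rw [abs_le]
      constructor <;> linarith [neg_abs_le (S - b'), le_abs_self (S - b')]
    calc |(∑ n, if (w, t).2 < ⟪(w, t).1, (X n : E3)⟫ then (1:ℝ) else 0) / N -
          (sigmaSphere (capS (w, t).1 (w, t).2)).toReal|
        ≤ |(∑ n, if (w, t).2 < ⟪(w, t).1, (X n : E3)⟫ then (1:ℝ) else 0) / N -
          (sigmaSphere (capS w' t')).toReal| + ε := by
          apply key
          rw [abs_sub_comm]
          exact hclose
      _ = |(∑ n, if (c'.val).2 < ⟪(c'.val).1, (X n : E3)⟫ then (1:ℝ) else 0) / N -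
          (sigmaSphere (capS (c'.val).1 (c'.val).2)).toReal| + ε := by
          rw [← hsum]

lemma sphCapDisc_eq_iSup (N : ℕ) (X : Fin N → S2) :
    sphCapDisc N X = ⨆ c : CapIdx, Fc N c X := rfl

lemma bddAbove_Fc (N : ℕ) (X : Fin N → S2) :
    BddAbove (Set.range fun c : CapIdx => Fc N c X) := by
  refine ⟨2, ?_⟩
  rintro _ ⟨c, rfl⟩
  exact Fc_le_two N c X

lemma Fc_le_sphCapDisc (N : ℕ) (c : CapIdx) (X : Fin N → S2) :
    Fc N c X ≤ sphCapDisc N X := by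
  rw [sphCapDisc_eq_iSup]
  exact le_ciSup (bddAbove_Fc N X) c

lemma sphCapDisc_nonneg (N : ℕ) (X : Fin N → S2) : 0 ≤ sphCapDisc N X :=
  le_trans (Fc_nonneg N (Classical.arbitrary _) X) (Fc_le_sphCapDisc N _ X)

lemma sphCapDisc_le_two (N : ℕ) (X : Fin N → S2) : sphCapDisc N X ≤ 2 := by
  rw [sphCapDisc_eq_iSup]
  exact ciSup_le fun c => Fc_le_two N c X

lemma measurable_sphCapDisc (N : ℕ) : Measurable (sphCapDisc N) := by
  obtain ⟨s, hsc, hsd⟩ := TopologicalSpace.exists_countable_dense CapIdx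
  have hnes : s.Nonempty := hsd.nonempty
  have hcnt : Countable ↥s := hsc.to_subtype
  have hnes' : Nonempty ↥s := hnes.to_subtype
  have heq : ∀ X, sphCapDisc N X = ⨆ c : s, Fc N c.1 X := by
    intro X
    rw [sphCapDisc_eq_iSup]
    have hbdd : BddAbove (Set.range fun c : s => Fc N c.1 X) := by
      refine ⟨2, ?_⟩
      rintro _ ⟨c', rfl⟩
      exact Fc_le_two N c'.1 X
    apply le_antisymm
    · apply ciSup_le
      intro c
      by_contra hlt
      push_neg at hlt
      obtain ⟨c', hc's, hle⟩ := Fc_approx N s hsd c X ((Fc N c X - ⨆ c : s, Fc N c.1 X)/2)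
        (by linarith)
      have hle2 : Fc N c' X ≤ ⨆ c : s, Fc N c.1 X := le_ciSup hbdd (⟨c', hc's⟩ : s)
      linarith
    · apply ciSup_le
      intro c
      exact le_ciSup (bddAbove_Fc N X) c.1
  rw [show sphCapDisc N = fun X => ⨆ c : s, Fc N c.1 X from funext heq]
  exact Measurable.iSup fun c => measurable_Fc N c.1

def gg : S2 → ℝ := fun y => (if (0:ℝ) < ⟪e₁, (y : E3)⟫ then (1:ℝ) else 0) - 1/2

lemma measurable_gg : Measurable gg := by
  apply Measurable.sub _ measurable_const
  exact Measurable.ite (measurableSet_capS e₁ 0) measurable_const measurable_const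

lemma gg_sq (y : S2) : gg y * gg y = 1/4 := by
  rw [gg]
  split_ifs <;> norm_num

lemma abs_gg_le (y : S2) : |gg y| ≤ 1/2 := by
  rw [gg]
  split_ifs <;> norm_num [abs_le]

lemma sigma_hemi_toReal : (sigmaSphere (capS e₁ 0)).toReal = 1/2 := by
  rw [sigma_hemisphere e₁ norm_e₁, ENNReal.toReal_div, ENNReal.toReal_one, ENNReal.toReal_ofNat]

lemma integral_gg : ∫ y, gg y ∂sigmaSphere = 0 := by
  have hmeas : Measurable (fun y : S2 => if (0:ℝ) < ⟪e₁, (y : E3)⟫ then (1:ℝ) else 0) :=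
    Measurable.ite (measurableSet_capS e₁ 0) measurable_const measurable_const
  have hint : Integrable (fun y : S2 => if (0:ℝ) < ⟪e₁, (y : E3)⟫ then (1:ℝ) else 0) sigmaSphere := by
    apply Integrable.mono' (integrable_const (1:ℝ)) hmeas.aestronglyMeasurable
    apply Filter.Eventually.of_forall
    intro y
    rw [Real.norm_eq_abs]
    split_ifs <;> norm_num
  have hind : (fun y : S2 => if (0:ℝ) < ⟪e₁, (y : E3)⟫ then (1:ℝ) else 0)
      = (capS e₁ 0).indicator (fun _ => (1:ℝ)) := by
    funext y
    rw [Set.indicator_apply]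
    rfl
  have h1 : ∫ y, (if (0:ℝ) < ⟪e₁, (y : E3)⟫ then (1:ℝ) else 0) ∂sigmaSphere = 1/2 := by
    rw [hind, integral_indicator_const _ (measurableSet_capS e₁ 0), measureReal_def, sigma_hemi_toReal]
    simp
  simp only [gg]
  rw [integral_sub hint (integrable_const _), h1, integral_const]
  simp

lemma measurable_ggX (N : ℕ) (n : Fin N) :
    Measurable (fun X : Fin N → S2 => gg (X n)) :=
  measurable_gg.comp (measurable_pi_apply n)

lemma integrable_term (N : ℕ) (n m : Fin N) :
    Integrable (fun X : Fin N → S2 => gg (X n) * gg (X m))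
      (Measure.pi fun _ : Fin N => sigmaSphere) := by
  apply Integrable.mono' (integrable_const (1/4 : ℝ))
    (((measurable_ggX N n).mul (measurable_ggX N m)).aestronglyMeasurable)
  apply Filter.Eventually.of_forall
  intro X
  rw [Real.norm_eq_abs, Pi.mul_apply, abs_mul]
  calc |gg (X n)| * |gg (X m)| ≤ (1/2) * (1/2) :=
      mul_le_mul (abs_gg_le _) (abs_gg_le _) (abs_nonneg _) (by norm_num)
    _ = 1/4 := by norm_num

lemma integral_term (N : ℕ) (n m : Fin N) :
    ∫ X, gg (X n) * gg (X m) ∂(Measure.pi fun _ : Fin N => sigmaSphere)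
      = if n = m then 1/4 else 0 := by
  rcases eq_or_ne n m with rfl | hnm
  · rw [if_pos rfl]
    have : (fun X : Fin N → S2 => gg (X n) * gg (X n)) = fun _ => (1/4 : ℝ) := by
      funext X; exact gg_sq (X n)
    rw [this, integral_const]
    simp
  · rw [if_neg hnm]
    letI : MeasureSpace (sphere (0 : EuclideanSpace ℝ (Fin 3)) 1) := ⟨sigmaSphere⟩
    haveI : IsProbabilityMeasure (volume : Measure S2) :=
      (inferInstance : IsProbabilityMeasure sigmaSphere)
    have hvol : (Measure.pi fun _ : Fin N => sigmaSphere)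
        = (volume : Measure (Fin N → S2)) := by
      rw [volume_pi]
      rfl
    set h : Fin N → S2 → ℝ := fun i => if i = n then gg else if i = m then gg else fun _ => 1
      with hh
    have hprod : ∀ X : Fin N → S2, gg (X n) * gg (X m) = ∏ i, h i (X i) := by
      intro X
      have hsub : ∏ i ∈ ({n, m} : Finset (Fin N)), h i (X i) = ∏ i, h i (X i) := by
        apply Finset.prod_subset (Finset.subset_univ _)
        intro i _ hi
        simp only [Finset.mem_insert, Finset.mem_singleton] at hi
        push_neg at hi
        rw [hh]
        simp only [if_neg hi.1, if_neg hi.2]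
      rw [← hsub, Finset.prod_pair hnm]
      simp [hh, Ne.symm hnm]
    rw [show (fun X : Fin N → S2 => gg (X n) * gg (X m)) = fun X => ∏ i, h i (X i)
      from funext hprod, hvol]
    rw [MeasureTheory.integral_fintype_prod_volume_eq_prod (ι := Fin N) h]
    apply Finset.prod_eq_zero (Finset.mem_univ n)
    have : h n = gg := by rw [hh]; simp
    rw [this]
    exact integral_gg

/-- For `N` i.i.d. uniformly distributed points on `S²`,
`E[D(Z_N)²] ≥ 1/(6N)`. -/
theorem expected_sq_capDisc_lower (N : ℕ) (hN : 0 < N) :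
    1 / (6 * (N : ℝ)) ≤
      ∫ X, (sphCapDisc N X) ^ 2 ∂(Measure.pi fun _ : Fin N => sigmaSphere) := by
  set P := Measure.pi fun _ : Fin N => sigmaSphere with hP
  haveI : IsProbabilityMeasure P := by rw [hP]; infer_instance
  have hNR : (0:ℝ) < N := Nat.cast_pos.mpr hN
  set q : (Fin N → S2) → ℝ := fun X => (∑ n, gg (X n)) / N with hq
  -- the hemisphere cap index
  set c₀ : CapIdx := ⟨(e₁, 0), norm_e₁, by constructor <;> norm_num⟩ with hc₀
  have hpt : ∀ X, q X ^ 2 ≤ sphCapDisc N X ^ 2 := by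
    intro X
    have hval : q X = (∑ n, if (0:ℝ) < ⟪e₁, (X n : E3)⟫ then (1:ℝ) else 0) / N - 1/2 := by
      rw [hq]
      simp only [gg]
      rw [Finset.sum_sub_distrib, Finset.sum_const, Finset.card_univ, Fintype.card_fin]
      rw [sub_div]
      congr 1
      rw [nsmul_eq_mul]
      field_simp
    have habs : |q X| = Fc N c₀ X := by
      rw [Fc, hc₀, hval]
      simp only
      rw [sigma_hemi_toReal]
    have h1 : |q X| ≤ sphCapDisc N X := habs ▸ Fc_le_sphCapDisc N c₀ X
    calc q X ^ 2 = |q X| ^ 2 := (sq_abs _).symm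
      _ ≤ sphCapDisc N X ^ 2 := by
          apply pow_le_pow_left₀ (abs_nonneg _) h1
  have hq2int : Integrable (fun X => q X ^ 2) P := by
    apply Integrable.mono' (integrable_const (1/4 : ℝ))
    · exact ((((Finset.measurable_sum Finset.univ
        (fun n _ => measurable_ggX N n)).div_const _).pow_const 2)).aestronglyMeasurable
    · apply Filter.Eventually.of_forall
      intro X
      rw [Real.norm_eq_abs, abs_of_nonneg (sq_nonneg _)]
      have hb : |q X| ≤ 1/2 := by
        rw [hq]
        simp only
        rw [abs_div, abs_of_nonneg hNR.le]
        rw [div_le_iff₀ hNR]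
        calc |∑ n, gg (X n)| ≤ ∑ n, |gg (X n)| := Finset.abs_sum_le_sum_abs _ _
          _ ≤ ∑ _n : Fin N, (1/2 : ℝ) := Finset.sum_le_sum (fun n _ => abs_gg_le (X n))
          _ = N * (1/2) := by rw [Finset.sum_const, Finset.card_univ, Fintype.card_fin,
                nsmul_eq_mul]
          _ = 1/2 * N := by ring
      calc q X ^ 2 = |q X| ^ 2 := (sq_abs _).symm
        _ ≤ (1/2) ^ 2 := by apply pow_le_pow_left₀ (abs_nonneg _) hb
        _ ≤ 1/4 := by norm_num
  have hD2int : Integrable (fun X => sphCapDisc N X ^ 2) P := by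
    apply Integrable.mono' (integrable_const (4:ℝ))
    · exact ((measurable_sphCapDisc N).pow_const 2).aestronglyMeasurable
    · apply Filter.Eventually.of_forall
      intro X
      rw [Real.norm_eq_abs, abs_of_nonneg (sq_nonneg _)]
      nlinarith [sphCapDisc_nonneg N X, sphCapDisc_le_two N X]
  have hint_q : ∫ X, q X ^ 2 ∂P = 1/(4*N) := by
    have hexp : (fun X : Fin N → S2 => q X ^ 2)
        = fun X => (∑ n, ∑ m, gg (X n) * gg (X m)) / (N^2 : ℝ) := by
      funext X
      rw [hq]
      simp only
      rw [div_pow, sq, Finset.sum_mul_sum]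
    rw [hexp, integral_div]
    rw [integral_finset_sum _ (fun n _ => integrable_finset_sum _
      (fun m _ => integrable_term N n m))]
    have heval : ∀ n : Fin N, ∑ m, (∫ X, gg (X n) * gg (X m) ∂P) = 1/4 := by
      intro n
      have : ∀ m : Fin N, (∫ X, gg (X n) * gg (X m) ∂P) = if n = m then 1/4 else 0 :=
        fun m => integral_term N n m
      rw [Finset.sum_congr rfl (fun m _ => this m)]
      rw [Finset.sum_ite_eq Finset.univ n (fun _ => (1/4 : ℝ))]
      rw [if_pos (Finset.mem_univ n)]
    calc (∑ n : Fin N, ∫ X, (∑ m, gg (X n) * gg (X m)) ∂P) / (N^2 : ℝ)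
        = (∑ n : Fin N, ∑ m, ∫ X, gg (X n) * gg (X m) ∂P) / (N^2 : ℝ) := by
          congr 1
          apply Finset.sum_congr rfl
          intro n _
          rw [integral_finset_sum _ (fun m _ => integrable_term N n m)]
      _ = (∑ _n : Fin N, (1/4 : ℝ)) / (N^2 : ℝ) := by
          congr 1
          exact Finset.sum_congr rfl (fun n _ => heval n)
      _ = (N * (1/4)) / (N^2 : ℝ) := by
          rw [Finset.sum_const, Finset.card_univ, Fintype.card_fin, nsmul_eq_mul]
      _ = 1/(4*N) := by
          field_simp
  calc 1 / (6 * (N:ℝ)) ≤ 1/(4*N) := by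
        apply one_div_le_one_div_of_le
        · positivity
        · linarith
    _ = ∫ X, q X ^ 2 ∂P := hint_q.symm
    _ ≤ ∫ X, (sphCapDisc N X) ^ 2 ∂P := integral_mono hq2int hD2int hpt
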